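/- arXiv:2112.08121 — 2 statements merged into one kernel-verified Lean document; each statement's English description precedes it below -/
import Mathlib

section
/- With Ω positive definite, A invertible, and W positive definite, there exists β̃ ∈ (0,1) (depending on bounds c₁ I ≤ Ω ≤ c₂ I and on W, A) such that (A Ω^{-1} A^T + W^{-1})^{-1} ≤ β̃ · A^{-T} Ω A^{-1}. -/
set_option maxHeartbeats 1000000

open Matrix

namespace PredAux

variable {n : ℕ}

lemma smul_psd {M : Matrix (Fin n) (Fin n) ℝ} (hM : M.PosSemidef) {a : ℝ} (ha : 0 ≤ a) :
    (a • M).PosSemidef := by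
  refine .of_dotProduct_mulVec_nonneg ?_ fun x => ?_
  · show (a • M)ᴴ = a • M
    rw [conjTranspose_smul, hM.1.eq, star_trivial]
  · rw [smul_mulVec, dotProduct_smul, smul_eq_mul]
    exact mul_nonneg ha (hM.dotProduct_mulVec_nonneg x)

lemma smul_posdef {M : Matrix (Fin n) (Fin n) ℝ} (hM : M.PosDef) {a : ℝ} (ha : 0 < a) :
    (a • M).PosDef := by
  refine .of_dotProduct_mulVec_pos ?_ fun ⦃x⦄ hx => ?_
  · show (a • M)ᴴ = a • M
    rw [conjTranspose_smul, hM.1.eq, star_trivial]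
  · rw [smul_mulVec, dotProduct_smul, smul_eq_mul]
    exact mul_pos ha (hM.dotProduct_mulVec_pos hx)

lemma posdef_conj {M A : Matrix (Fin n) (Fin n) ℝ} (hM : M.PosDef) (hA : IsUnit A.det) :
    (A * M * Aᵀ).PosDef := by
  rw [← conjTranspose_eq_transpose_of_trivial A]
  refine .of_dotProduct_mulVec_pos (isHermitian_mul_mul_conjTranspose _ hM.1) fun ⦃x⦄ hx => ?_
  have hAHd : IsUnit Aᴴ.det := by rw [det_conjTranspose, star_trivial]; exact hA
  have hx' : Aᴴ *ᵥ x ≠ 0 := by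
    intro h0
    exact hx (mulVec_injective_iff_isUnit.mpr ((isUnit_iff_isUnit_det _).mpr hAHd)
      (by simpa using h0))
  have h2 := hM.dotProduct_mulVec_pos hx'
  simpa only [star_mulVec, conjTranspose_conjTranspose, dotProduct_mulVec, vecMul_vecMul,
    Matrix.mul_assoc] using h2

lemma inv_sub_inv_psd {X Y : Matrix (Fin n) (Fin n) ℝ}
    (hX : X.PosDef) (hY : Y.PosDef) (h : (Y - X).PosSemidef) :
    (X⁻¹ - Y⁻¹).PosSemidef := by
  have hXd : IsUnit X.det := hX.det_pos.ne'.isUnit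
  have hYd : IsUnit Y.det := hY.det_pos.ne'.isUnit
  have h1 : X * X⁻¹ = 1 := mul_nonsing_inv _ hXd
  have h2 : X⁻¹ * X = 1 := nonsing_inv_mul _ hXd
  have h3 : Y * Y⁻¹ = 1 := mul_nonsing_inv _ hYd
  have h4 : Y⁻¹ * Y = 1 := nonsing_inv_mul _ hYd
  have key : X⁻¹ - Y⁻¹ =
      Y⁻¹ * (Y - X) * Y⁻¹ + Y⁻¹ * (Y - X) * X⁻¹ * ((Y - X) * Y⁻¹) := by
    have e1 : Y⁻¹ * (Y - X) * X⁻¹ = X⁻¹ - Y⁻¹ := by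
      rw [Matrix.mul_sub, Matrix.sub_mul, h4, Matrix.one_mul, Matrix.mul_assoc, h1, Matrix.mul_one]
    have e2 : (Y - X) * Y⁻¹ = 1 - X * Y⁻¹ := by
      rw [Matrix.sub_mul, h3]
    have e3 : Y⁻¹ * (Y - X) * Y⁻¹ = Y⁻¹ - Y⁻¹ * (X * Y⁻¹) := by
      rw [Matrix.mul_sub, Matrix.sub_mul, h4, Matrix.one_mul, Matrix.mul_assoc]
    have e4 : X⁻¹ * (X * Y⁻¹) = Y⁻¹ := by
      rw [← Matrix.mul_assoc, h2, Matrix.one_mul]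
    rw [e1, e2, e3, Matrix.mul_sub, Matrix.mul_one, Matrix.sub_mul, e4]
    abel
  rw [key]
  have t1 : (Y⁻¹ * (Y - X) * Y⁻¹).PosSemidef := by
    have := h.conjTranspose_mul_mul_same Y⁻¹
    rwa [hY.inv.1.eq] at this
  have t2 : (Y⁻¹ * (Y - X) * X⁻¹ * ((Y - X) * Y⁻¹)).PosSemidef := by
    have := (hX.inv.posSemidef).conjTranspose_mul_mul_same ((Y - X) * Y⁻¹)
    rwa [conjTranspose_mul, h.1.eq, hY.inv.1.eq] at this
  exact t1.add t2

lemma exists_smul_one_sub_psd (P : Matrix (Fin n) (Fin n) ℝ) (hP : P.IsHermitian) :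
    ∃ M : ℝ, 0 < M ∧ (M • (1 : Matrix (Fin n) (Fin n) ℝ) - P).PosSemidef := by
  refine ⟨(∑ i, ∑ j, |P i j|) + 1, by positivity, .of_dotProduct_mulVec_nonneg ?_ fun x => ?_⟩
  · show (_ : Matrix (Fin n) (Fin n) ℝ)ᴴ = _
    rw [conjTranspose_sub, conjTranspose_smul, hP.eq, star_trivial, conjTranspose_one]
  · set M : ℝ := (∑ i, ∑ j, |P i j|) + 1 with hM
    have hS : ∀ k, x k ^ 2 ≤ ∑ l, x l ^ 2 := fun k =>
      Finset.single_le_sum (fun l _ => sq_nonneg (x l)) (Finset.mem_univ k)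
    have hbound : ∀ i j, x i * (P i j * x j) ≤ |P i j| * ∑ l, x l ^ 2 := by
      intro i j
      have h1 : x i * (P i j * x j) ≤ |P i j| * (|x i| * |x j|) := by
        calc x i * (P i j * x j) ≤ |x i * (P i j * x j)| := le_abs_self _
        _ = |P i j| * (|x i| * |x j|) := by rw [abs_mul, abs_mul]; ring
      have h2 : |x i| * |x j| ≤ ∑ l, x l ^ 2 := by
        nlinarith [sq_nonneg (|x i| - |x j|), sq_abs (x i), sq_abs (x j), hS i, hS j]
      calc x i * (P i j * x j) ≤ |P i j| * (|x i| * |x j|) := h1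
      _ ≤ |P i j| * ∑ l, x l ^ 2 := by
          exact mul_le_mul_of_nonneg_left h2 (abs_nonneg _)
    have hq : star x ⬝ᵥ (P *ᵥ x) ≤ M * ∑ l, x l ^ 2 := by
      have hx2 : (0:ℝ) ≤ ∑ l, x l ^ 2 := Finset.sum_nonneg fun l _ => sq_nonneg _
      calc star x ⬝ᵥ (P *ᵥ x) = ∑ i, ∑ j, x i * (P i j * x j) := by
            simp [dotProduct, mulVec, Finset.mul_sum]
      _ ≤ ∑ i, ∑ j, |P i j| * ∑ l, x l ^ 2 := by
            refine Finset.sum_le_sum fun i _ => Finset.sum_le_sum fun j _ => hbound i j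
      _ = (∑ i, ∑ j, |P i j|) * ∑ l, x l ^ 2 := by
            rw [Finset.sum_mul]; congr 1; ext i; rw [Finset.sum_mul]
      _ ≤ M * ∑ l, x l ^ 2 := by
            apply mul_le_mul_of_nonneg_right _ hx2
            rw [hM]; linarith
    have : star x ⬝ᵥ ((M • (1 : Matrix (Fin n) (Fin n) ℝ) - P) *ᵥ x)
        = M * ∑ l, x l ^ 2 - star x ⬝ᵥ (P *ᵥ x) := by
      rw [Matrix.sub_mulVec, dotProduct_sub, smul_mulVec, one_mulVec, dotProduct_smul]
      simp [dotProduct, pow_two, smul_eq_mul]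
    rw [this]
    linarith

end PredAux

/-- With `A` invertible, `W ≻ 0`, there exists `β̃ ∈ (0,1)` (depending only on
the bounds `c₁ I ≤ Ω ≤ c₂ I`, on `W` and on `A`) such that
`(A Ω⁻¹ Aᵀ + W⁻¹)⁻¹ ≤ β̃ · A⁻ᵀ Ω A⁻¹` for every symmetric `Ω` in the band. -/
theorem prediction_map_strict_contraction {n : ℕ}
    (A W : Matrix (Fin n) (Fin n) ℝ)
    (hA : IsUnit A.det) (hW : W.PosDef)
    (c₁ c₂ : ℝ) (hc₁ : 0 < c₁) (hc : c₁ ≤ c₂) :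
    ∃ β : ℝ, 0 < β ∧ β < 1 ∧
      ∀ Ω : Matrix (Fin n) (Fin n) ℝ, Ω.IsSymm →
        (Ω - c₁ • 1).PosSemidef →
        (c₂ • (1 : Matrix (Fin n) (Fin n) ℝ) - Ω).PosSemidef →
        (β • ((A.transpose)⁻¹ * Ω * A⁻¹) - (A * Ω⁻¹ * A.transpose + W⁻¹)⁻¹).PosSemidef := by
  classical
  obtain ⟨MA, hMA0, hMA⟩ := PredAux.exists_smul_one_sub_psd (A * Aᵀ)
    (by rw [← conjTranspose_eq_transpose_of_trivial A]
        exact isHermitian_mul_conjTranspose_self A)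
  obtain ⟨MW, hMW0, hMW⟩ := PredAux.exists_smul_one_sub_psd W hW.1
  set Mc : ℝ := c₁⁻¹ * MA with hMcdef
  set m : ℝ := MW⁻¹ with hmdef
  have hMc0 : 0 < Mc := by positivity
  have hm0 : 0 < m := by positivity
  refine ⟨Mc / (Mc + m), by positivity, ?_, ?_⟩
  · rw [div_lt_one (by positivity)]; linarith
  intro Ω hΩsymm hlow hup
  have hc₁1 : ((c₁ : ℝ) • (1 : Matrix (Fin n) (Fin n) ℝ)).PosDef :=
    PredAux.smul_posdef Matrix.PosDef.one hc₁
  have hΩ : Ω.PosDef := by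
    have := hc₁1.add_posSemidef hlow
    rwa [add_sub_cancel] at this
  have hΩd : IsUnit Ω.det := hΩ.det_pos.ne'.isUnit
  have hAt : IsUnit Aᵀ.det := by rwa [det_transpose]
  -- inverse of c₁ • 1
  have hc1inv : ((c₁ : ℝ) • (1 : Matrix (Fin n) (Fin n) ℝ))⁻¹ = c₁⁻¹ • 1 := by
    apply inv_eq_right_inv
    rw [Matrix.smul_mul, Matrix.mul_smul, smul_smul, mul_inv_cancel₀ hc₁.ne', Matrix.one_mul,
      one_smul]
  have hΩinv : (c₁⁻¹ • (1 : Matrix (Fin n) (Fin n) ℝ) - Ω⁻¹).PosSemidef := by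
    have := PredAux.inv_sub_inv_psd hc₁1 hΩ hlow
    rwa [hc1inv] at this
  -- S bound
  set S : Matrix (Fin n) (Fin n) ℝ := A * Ω⁻¹ * Aᵀ with hSdef
  have hS : S.PosDef := PredAux.posdef_conj hΩ.inv hA
  have hSb : (Mc • (1 : Matrix (Fin n) (Fin n) ℝ) - S).PosSemidef := by
    have hconj := hΩinv.mul_mul_conjTranspose_same A
    rw [conjTranspose_eq_transpose_of_trivial, Matrix.mul_sub, Matrix.sub_mul,
      Matrix.mul_smul, Matrix.mul_one, Matrix.smul_mul] at hconj
    -- hconj : (c₁⁻¹ • (A * Aᵀ) - A * Ω⁻¹ * Aᵀ).PosSemidef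
    have h2 := (PredAux.smul_psd hMA (le_of_lt (inv_pos.mpr hc₁))).add hconj
    have e : c₁⁻¹ • (MA • (1 : Matrix (Fin n) (Fin n) ℝ) - A * Aᵀ) +
        (c₁⁻¹ • (A * Aᵀ) - A * Ω⁻¹ * Aᵀ) = Mc • 1 - S := by
      rw [smul_sub, smul_smul, hMcdef, hSdef]
      abel
    rwa [e] at h2
  -- W⁻¹ lower bound
  have hMW1 : ((MW : ℝ) • (1 : Matrix (Fin n) (Fin n) ℝ)).PosDef :=
    PredAux.smul_posdef Matrix.PosDef.one hMW0
  have hMWinv : ((MW : ℝ) • (1 : Matrix (Fin n) (Fin n) ℝ))⁻¹ = m • 1 := by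
    apply inv_eq_right_inv
    rw [Matrix.smul_mul, Matrix.mul_smul, smul_smul, hmdef, mul_inv_cancel₀ hMW0.ne',
      Matrix.one_mul, one_smul]
  have hWlow : (W⁻¹ - m • (1 : Matrix (Fin n) (Fin n) ℝ)).PosSemidef := by
    have := PredAux.inv_sub_inv_psd hW hMW1 hMW
    rwa [hMWinv] at this
  -- final contraction step
  set r : ℝ := (Mc + m) / Mc with hrdef
  have hr0 : 0 < r := by positivity
  have hrS : (r • S).PosDef := PredAux.smul_posdef hS hr0
  have hT : (S + W⁻¹).PosDef := hS.add hW.inv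
  have hTX : ((S + W⁻¹) - r • S).PosSemidef := by
    have h1 := hWlow.add (PredAux.smul_psd hSb (le_of_lt (div_pos hm0 hMc0)))
    have e : (W⁻¹ - m • (1 : Matrix (Fin n) (Fin n) ℝ)) +
        (m / Mc) • (Mc • (1 : Matrix (Fin n) (Fin n) ℝ) - S) = (S + W⁻¹) - r • S := by
      rw [smul_sub, smul_smul, div_mul_cancel₀ _ hMc0.ne']
      have hr1 : r • S = S + (m / Mc) • S := by
        have hre : r = 1 + m / Mc := by
          rw [hrdef]; field_simp
        rw [hre, add_smul, one_smul]
      rw [hr1]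
      abel
    rwa [e] at h1
  have hmain := PredAux.inv_sub_inv_psd hrS hT hTX
  have hSinv : S * (Aᵀ⁻¹ * Ω * A⁻¹) = 1 := by
    rw [hSdef]
    simp only [Matrix.mul_assoc]
    rw [mul_nonsing_inv_cancel_left _ _ hAt, nonsing_inv_mul_cancel_left _ _ hΩd,
      mul_nonsing_inv _ hA]
  have hrinv : (r • S)⁻¹ = (Mc / (Mc + m)) • (Aᵀ⁻¹ * Ω * A⁻¹) := by
    apply inv_eq_right_inv
    rw [Matrix.smul_mul, Matrix.mul_smul, hSinv, smul_smul]
    have : r * (Mc / (Mc + m)) = 1 := by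
      rw [hrdef]
      field_simp
    rw [this, one_smul]
  rwa [hrinv] at hmain
end

section
/- Let Ω₁,...,Ω_k be symmetric positive definite n×n matrices, w₁,...,w_k ≥ 0 with ∑ w_j > 0, and set Ω = ∑_j w_j Ω_j. Then for any vectors x₁,...,x_k ∈ ℝⁿ, (∑_j w_j Ω_j x_j)^T Ω^{-1} (∑_j w_j Ω_j x_j) ≤ ∑_j w_j x_j^T Ω_j x_j. -/
open Matrix

private lemma dot_finsum {n k : ℕ} (y : Fin n → ℝ) (f : Fin k → Fin n → ℝ) :
    y ⬝ᵥ (∑ j, f j) = ∑ j, y ⬝ᵥ f j := by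
  simp only [dotProduct, Finset.sum_apply, Finset.mul_sum]
  exact Finset.sum_comm

private lemma finsum_mulVec {n k : ℕ} (M : Fin k → Matrix (Fin n) (Fin n) ℝ) (y : Fin n → ℝ) :
    (∑ j, M j) *ᵥ y = ∑ j, (M j) *ᵥ y := by
  ext i
  simp only [mulVec, dotProduct, Finset.sum_apply, Matrix.sum_apply, Finset.sum_mul]
  exact Finset.sum_comm

/-- Weighted Jensen-type quadratic inequality: for positive definite `Ω j`,
nonnegative weights `w j` with positive sum, and `Ω = ∑ j, w j • Ω j` invertible,
`(∑ j, w j • Ω j x j)ᵀ Ω⁻¹ (∑ j, w j • Ω j x j) ≤ ∑ j, w j * x jᵀ Ω j x j`. -/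
theorem weighted_jensen_quadratic {n k : ℕ}
    (Ω : Fin k → Matrix (Fin n) (Fin n) ℝ)
    (hΩ : ∀ j, (Ω j).PosDef)
    (w : Fin k → ℝ) (hw : ∀ j, 0 ≤ w j) (hwsum : 0 < ∑ j, w j)
    (hinv : IsUnit (∑ j, w j • Ω j).det)
    (x : Fin k → Fin n → ℝ) :
    ((∑ j, w j • (Ω j).mulVec (x j)) ⬝ᵥ
        ((∑ j, w j • Ω j)⁻¹).mulVec (∑ j, w j • (Ω j).mulVec (x j))) ≤
      ∑ j, w j * ((x j) ⬝ᵥ ((Ω j).mulVec (x j))) := by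
  set S := ∑ j, w j • Ω j with hS
  set v := ∑ j, w j • (Ω j).mulVec (x j) with hv
  set y := S⁻¹.mulVec v with hy
  have hSy : S.mulVec y = v := by
    rw [hy, Matrix.mulVec_mulVec, Matrix.mul_nonsing_inv _ hinv, Matrix.one_mulVec]
  have key : 0 ≤ ∑ j, w j * ((x j - y) ⬝ᵥ (Ω j).mulVec (x j - y)) := by
    refine Finset.sum_nonneg fun j _ => mul_nonneg (hw j) ?_
    have := (hΩ j).posSemidef.dotProduct_mulVec_nonneg (x j - y)
    simpa using this
  have hsym : ∀ j (a b : Fin n → ℝ), a ⬝ᵥ (Ω j).mulVec b = b ⬝ᵥ (Ω j).mulVec a := by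
    intro j a b
    have ht : (Ω j)ᵀ = Ω j := by
      have := (hΩ j).isHermitian.eq
      simpa [Matrix.conjTranspose, Matrix.map, Matrix.transpose] using this
    rw [Matrix.dotProduct_mulVec, ← Matrix.mulVec_transpose, ht, dotProduct_comm]
  have hyv : ∑ j, w j * (y ⬝ᵥ (Ω j).mulVec (x j)) = y ⬝ᵥ v := by
    rw [hv, dot_finsum]
    refine (Finset.sum_congr rfl fun j _ => ?_).symm
    rw [dotProduct_smul, smul_eq_mul]
  have hyy : ∑ j, w j * (y ⬝ᵥ (Ω j).mulVec y) = y ⬝ᵥ v := by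
    rw [← hSy, hS, finsum_mulVec, dot_finsum]
    refine (Finset.sum_congr rfl fun j _ => ?_).symm
    rw [Matrix.smul_mulVec, dotProduct_smul, smul_eq_mul]
  have hexp : ∑ j, w j * ((x j - y) ⬝ᵥ (Ω j).mulVec (x j - y)) =
      ∑ j, w j * ((x j) ⬝ᵥ ((Ω j).mulVec (x j))) - 2 * (y ⬝ᵥ v) + (y ⬝ᵥ v) := by
    have h1 : ∀ j, w j * ((x j - y) ⬝ᵥ (Ω j).mulVec (x j - y)) =
        w j * ((x j) ⬝ᵥ (Ω j).mulVec (x j)) - 2 * (w j * (y ⬝ᵥ (Ω j).mulVec (x j)))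
          + w j * (y ⬝ᵥ (Ω j).mulVec y) := by
      intro j
      rw [Matrix.mulVec_sub, sub_dotProduct, dotProduct_sub,
        dotProduct_sub, hsym j (x j) y]
      ring
    rw [Finset.sum_congr rfl fun j _ => h1 j, Finset.sum_add_distrib,
      Finset.sum_sub_distrib, ← Finset.mul_sum, hyv, hyy]
  have hgoal : v ⬝ᵥ S⁻¹.mulVec v = y ⬝ᵥ v := by
    rw [hy, dotProduct_comm]
  rw [hgoal]
  rw [hexp] at key
  linarith
end
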